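/- Let w_1,…,w_n > 0 and Λ_w = diag(w_1,…,w_n), and let κ_1,…,κ_n denote the eigenvalues of the symmetric positive definite matrix Λ_w C Λ_w. Then for every A ∈ 𝒜, tr(Aᵀ Λ_σ C Λ_w) ≤ Σ_{i=1}^n κ_i^{1/2}. -/

import Mathlib

open Matrix BigOperators

noncomputable def Matrix.PosSemidef.sqrt {n : ℕ} {A : Matrix (Fin n) (Fin n) ℝ}
    (hA : A.PosSemidef) : Matrix (Fin n) (Fin n) ℝ :=
  hA.1.eigenvectorUnitary * diagonal (fun i => Real.sqrt (hA.1.eigenvalues i)) *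
    star hA.1.eigenvectorUnitary

lemma Matrix.PosSemidef.posSemidef_sqrt {n : ℕ} {A : Matrix (Fin n) (Fin n) ℝ}
    (hA : A.PosSemidef) : hA.sqrt.PosSemidef := by
  unfold Matrix.PosSemidef.sqrt
  have hd : (diagonal (fun i => Real.sqrt (hA.1.eigenvalues i))).PosSemidef :=
    PosSemidef.diagonal fun i => Real.sqrt_nonneg _
  have := hd.mul_mul_conjTranspose_same (hA.1.eigenvectorUnitary : Matrix (Fin n) (Fin n) ℝ)
  simpa [Matrix.star_eq_conjTranspose] using this

lemma Matrix.PosSemidef.sqrt_mul_self {n : ℕ} {A : Matrix (Fin n) (Fin n) ℝ}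
    (hA : A.PosSemidef) : hA.sqrt * hA.sqrt = A := by
  unfold Matrix.PosSemidef.sqrt
  conv_rhs => rw [hA.1.spectral_theorem]
  rw [Unitary.conjStarAlgAut_apply]
  have hu := Unitary.coe_star_mul_self hA.1.eigenvectorUnitary
  calc _ = (hA.1.eigenvectorUnitary : Matrix (Fin n) (Fin n) ℝ) *
        diagonal (fun i => Real.sqrt (hA.1.eigenvalues i)) *
        ((star (hA.1.eigenvectorUnitary : Matrix (Fin n) (Fin n) ℝ)) * hA.1.eigenvectorUnitary) *
        diagonal (fun i => Real.sqrt (hA.1.eigenvalues i)) * star hA.1.eigenvectorUnitary := by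
          simp only [Matrix.mul_assoc, Unitary.coe_star]
    _ = _ := by
      rw [Unitary.coe_star, hu, Matrix.mul_one]
      simp only [Matrix.mul_assoc]
      congr 1
      rw [← Matrix.mul_assoc, diagonal_mul_diagonal]
      congr 2
      funext i
      simp [Real.mul_self_sqrt (hA.eigenvalues_nonneg i)]

/-- Trace of `Q * P` for `Q` orthogonal and `P` positive semidefinite is at most `trace P`. -/
lemma aux_trace_orth_mul_le {n : ℕ} (Q P : Matrix (Fin n) (Fin n) ℝ)
    (hQ : Qᵀ * Q = 1) (hP : P.PosSemidef) : (Q * P).trace ≤ P.trace := by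
  set R := hP.sqrt with hRdef
  have hRsym : Rᵀ = R := by
    have h := hP.posSemidef_sqrt.1
    rwa [Matrix.IsHermitian, Matrix.conjTranspose_eq_transpose_of_trivial] at h
  have hRR : R * R = P := hP.sqrt_mul_self
  have h1 : (Q * P).trace = (R * (Q * R)).trace := by
    rw [← hRR, ← Matrix.mul_assoc, Matrix.trace_mul_comm, ← Matrix.mul_assoc]
  rw [h1]
  have hdiag : ∀ i, (R * (Q * R)) i i ≤ P i i := by
    intro i
    have hs : ∑ j, (R i j) ^ 2 = P i i := by
      rw [← hRR, Matrix.mul_apply]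
      refine Finset.sum_congr rfl fun j _ => ?_
      have hji : R j i = R i j := (congrFun (congrFun hRsym j) i).symm
      rw [hji]; ring
    have ht : ∑ j, ((Q * R) j i) ^ 2 = P i i := by
      have hQR : (Q * R)ᵀ * (Q * R) = P := by
        rw [Matrix.transpose_mul, Matrix.mul_assoc, ← Matrix.mul_assoc Qᵀ, hQ,
          Matrix.one_mul, hRsym, hRR]
      have := congrFun (congrFun hQR i) i
      rw [Matrix.mul_apply] at this
      rw [← this]
      refine Finset.sum_congr rfl fun j _ => ?_
      rw [Matrix.transpose_apply]; ring
    have hcs := Real.sum_mul_le_sqrt_mul_sqrt Finset.univ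
      (fun j => R i j) (fun j => (Q * R) j i)
    rw [hs, ht] at hcs
    have hPnn : 0 ≤ P i i := by
      rw [← hs]; positivity
    calc (R * (Q * R)) i i = ∑ j, R i j * (Q * R) j i := Matrix.mul_apply
      _ ≤ Real.sqrt (P i i) * Real.sqrt (P i i) := hcs
      _ = P i i := Real.mul_self_sqrt hPnn
  calc (R * (Q * R)).trace = ∑ i, (R * (Q * R)) i i := rfl
    _ ≤ ∑ i, P i i := Finset.sum_le_sum fun i _ => hdiag i
    _ = P.trace := rfl

/-- Trace of the psd square root is the sum of square roots of the eigenvalues. -/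
lemma aux_trace_sqrt {n : ℕ} {K : Matrix (Fin n) (Fin n) ℝ} (hK : K.PosSemidef) :
    hK.sqrt.trace = ∑ i, Real.sqrt (hK.1.eigenvalues i) := by
  rw [Matrix.PosSemidef.sqrt, Matrix.trace_mul_cycle]
  rw [Unitary.coe_star, Unitary.coe_star_mul_self, Matrix.one_mul, Matrix.trace_diagonal]

theorem stmt_0 {n : ℕ} (hn : 1 ≤ n)
    (S : Matrix (Fin n) (Fin n) ℝ) (hS : S.PosDef)
    (Ls : Matrix (Fin n) (Fin n) ℝ)
    (hLs : Ls = Matrix.diagonal (fun i => Real.sqrt (S i i)))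
    (C : Matrix (Fin n) (Fin n) ℝ) (hC : C = Ls⁻¹ * S * Ls⁻¹)
    (w : Fin n → ℝ) (hw : ∀ i, 0 < w i)
    (Lw : Matrix (Fin n) (Fin n) ℝ) (hLw : Lw = Matrix.diagonal w)
    (hK : (Lw * C * Lw).PosDef)
    (A : Matrix (Fin n) (Fin n) ℝ) (hA : Aᵀ * S * A = 1) :
    (Aᵀ * Ls * C * Lw).trace ≤ ∑ i, Real.sqrt (hK.1.eigenvalues i) := by
  -- diagonal entries of S are positive
  have hSd : ∀ i, 0 < S i i := by
    intro i
    have hx : (Pi.single i 1 : Fin n → ℝ) ≠ 0 := by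
      intro h
      have := congrFun h i
      simp at this
    have h := hS.dotProduct_mulVec_pos hx
    simpa [dotProduct, Matrix.mulVec, Pi.single_apply] using h
  -- Ls is invertible
  have hLsPD : Ls.PosDef := by
    rw [hLs]
    exact Matrix.PosDef.diagonal fun i => Real.sqrt_pos.mpr (hSd i)
  have hLsdet : IsUnit Ls.det := hLsPD.det_pos.ne'.isUnit
  have hLscancel : Ls * Ls⁻¹ = 1 := Matrix.mul_nonsing_inv _ hLsdet
  have hLsiT : (Ls⁻¹)ᵀ = Ls⁻¹ := by
    rw [Matrix.transpose_nonsing_inv, hLs, Matrix.diagonal_transpose]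
  have hLwT : Lwᵀ = Lw := by rw [hLw, Matrix.diagonal_transpose]
  -- square root of S
  set RS := hS.posSemidef.sqrt with hRSdef
  have hRSsym : RSᵀ = RS := by
    have h := hS.posSemidef.posSemidef_sqrt.1
    rwa [Matrix.IsHermitian, Matrix.conjTranspose_eq_transpose_of_trivial] at h
  have hRS2 : RS * RS = S := hS.posSemidef.sqrt_mul_self
  set B := RS * A with hBdef
  set M := RS * (Ls⁻¹ * Lw) with hMdef
  have hBB : Bᵀ * B = 1 := by
    rw [hBdef, Matrix.transpose_mul, hRSsym]
    calc Aᵀ * RS * (RS * A) = Aᵀ * (RS * RS) * A := by simp only [Matrix.mul_assoc]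
      _ = Aᵀ * S * A := by rw [hRS2]
      _ = 1 := hA
  -- Mᵀ M = K
  have hMM : Mᵀ * M = Lw * C * Lw := by
    rw [hMdef, Matrix.transpose_mul, Matrix.transpose_mul, hRSsym, hLsiT, hLwT, hC]
    calc Lw * Ls⁻¹ * RS * (RS * (Ls⁻¹ * Lw))
        = Lw * Ls⁻¹ * (RS * RS) * (Ls⁻¹ * Lw) := by
          simp only [Matrix.mul_assoc]
      _ = Lw * (Ls⁻¹ * S * Ls⁻¹) * Lw := by rw [hRS2]; simp only [Matrix.mul_assoc]
  -- square root of K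
  set K := Lw * C * Lw with hKdef
  set P := hK.posSemidef.sqrt with hPdef
  have hPP : P * P = K := hK.posSemidef.sqrt_mul_self
  have hPsym : Pᵀ = P := by
    have h := hK.posSemidef.posSemidef_sqrt.1
    rwa [Matrix.IsHermitian, Matrix.conjTranspose_eq_transpose_of_trivial] at h
  have hPdet : IsUnit P.det := by
    have hdd : P.det * P.det = K.det := by rw [← Matrix.det_mul, hPP]
    have hKdet : K.det ≠ 0 := hK.det_pos.ne'
    have : P.det ≠ 0 := fun h => hKdet (by rw [← hdd, h, mul_zero])
    exact this.isUnit
  have hPinv : P * P⁻¹ = 1 := Matrix.mul_nonsing_inv _ hPdet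
  have hPinv' : P⁻¹ * P = 1 := Matrix.nonsing_inv_mul _ hPdet
  have hPinvT : (P⁻¹)ᵀ = P⁻¹ := by rw [Matrix.transpose_nonsing_inv, hPsym]
  set U := M * P⁻¹ with hUdef
  have hUU : Uᵀ * U = 1 := by
    rw [hUdef, Matrix.transpose_mul, hPinvT, Matrix.mul_assoc, ← Matrix.mul_assoc Mᵀ,
      hMM, ← hPP]
    calc P⁻¹ * (P * P * P⁻¹) = P⁻¹ * (P * (P * P⁻¹)) := by rw [Matrix.mul_assoc]
      _ = 1 := by rw [hPinv, Matrix.mul_one, hPinv']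
  have hUP : U * P = M := by
    rw [hUdef, Matrix.mul_assoc, hPinv', Matrix.mul_one]
  set Q := Bᵀ * U with hQdef
  have hQQ : Qᵀ * Q = 1 := by
    have hBB' : B * Bᵀ = 1 := mul_eq_one_comm.mp hBB
    rw [hQdef, Matrix.transpose_mul, Matrix.transpose_transpose, Matrix.mul_assoc,
      ← Matrix.mul_assoc B, hBB', Matrix.one_mul, hUU]
  -- rewrite the objective
  have hobj : Aᵀ * Ls * C * Lw = Q * P := by
    have h1 : Q * P = Bᵀ * M := by rw [hQdef, Matrix.mul_assoc, hUP]
    rw [h1, hBdef, hMdef, Matrix.transpose_mul, hRSsym, hC]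
    calc Aᵀ * Ls * (Ls⁻¹ * S * Ls⁻¹) * Lw
        = Aᵀ * ((Ls * Ls⁻¹) * (S * (Ls⁻¹ * Lw))) := by simp only [Matrix.mul_assoc]
      _ = Aᵀ * (S * (Ls⁻¹ * Lw)) := by rw [hLscancel, Matrix.one_mul]
      _ = Aᵀ * RS * (RS * (Ls⁻¹ * Lw)) := by
          rw [Matrix.mul_assoc, ← Matrix.mul_assoc RS, hRS2, ← Matrix.mul_assoc]
  rw [hobj]
  calc (Q * P).trace ≤ P.trace :=
        aux_trace_orth_mul_le Q P hQQ hK.posSemidef.posSemidef_sqrt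
    _ = ∑ i, Real.sqrt (hK.posSemidef.1.eigenvalues i) := aux_trace_sqrt hK.posSemidef
    _ = ∑ i, Real.sqrt (hK.1.eigenvalues i) := rfl
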